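/- Let x ∈ ℝ^m, y ∈ ℝ^n, r = gcd(m,n), and partition x into r equal blocks x_1,…,x_r ∈ ℝ^{m/r} and y into r equal blocks y_1,…,y_r ∈ ℝ^{n/r}. Then the VV-STP satisfies x ⊙ y = Σ_{i=1}^r x_i ⊙ y_i. -/

import Mathlib

open Matrix Kronecker Finset

noncomputable section

/-- The all-ones column vector of length `k`, viewed as a `k × 1` matrix. -/
def onesCol (k : ℕ) : Matrix (Fin k) (Fin 1) ℝ := Matrix.of fun _ _ => 1

/-- `A ⊗ 1ᵀ_α`, reindexed to an ordinary `Fin`-indexed matrix. -/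
def rightExpand {m n : ℕ} (A : Matrix (Fin m) (Fin n) ℝ) (α : ℕ) :
    Matrix (Fin m) (Fin (n * α)) ℝ :=
  Matrix.reindex (Equiv.prodUnique (Fin m) (Fin 1)) finProdFinEquiv (A ⊗ₖ (onesCol α)ᵀ)

/-- `B ⊗ 1_β`, reindexed to an ordinary `Fin`-indexed matrix. -/
def leftExpand {p q : ℕ} (B : Matrix (Fin p) (Fin q) ℝ) (β : ℕ) :
    Matrix (Fin (p * β)) (Fin q) ℝ :=
  Matrix.reindex finProdFinEquiv (Equiv.prodUnique (Fin q) (Fin 1)) (B ⊗ₖ onesCol β)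

theorem dk_dim_eq (n p : ℕ) :
    n * (Nat.lcm n p / n) = p * (Nat.lcm n p / p) := by
  rw [Nat.mul_div_cancel' (Nat.dvd_lcm_left n p),
    Nat.mul_div_cancel' (Nat.dvd_lcm_right n p)]

/-- The dimension keeping semi-tensor product (DK-STP)
`A ⊛ B := (A ⊗ 1ᵀ_{t/n})(B ⊗ 1_{t/p})`, `t = lcm(n,p)`. -/
def dkstp {m n p q : ℕ} (A : Matrix (Fin m) (Fin n) ℝ) (B : Matrix (Fin p) (Fin q) ℝ) :
    Matrix (Fin m) (Fin q) ℝ :=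
  rightExpand A (Nat.lcm n p / n) *
    (leftExpand B (Nat.lcm n p / p)).submatrix (Fin.cast (dk_dim_eq n p)) id

infixl:70 " ⊛ " => dkstp

/-- The bridge matrix `Ψ_{n×p} := (I_n ⊗ 1ᵀ_{t/n})(I_p ⊗ 1_{t/p})`. -/
def bridge (n p : ℕ) : Matrix (Fin n) (Fin p) ℝ :=
  (1 : Matrix (Fin n) (Fin n) ℝ) ⊛ (1 : Matrix (Fin p) (Fin p) ℝ)

/-- `x ⊗ 1_α`, as a vector of length `m * α`. -/
def vecExpand {m : ℕ} (x : Fin m → ℝ) (α : ℕ) : Fin (m * α) → ℝ :=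
  fun i => x (finProdFinEquiv.symm i).1

/-- The VV-STP `x ⊙ y := (x ⊗ 1_{t/m})ᵀ(y ⊗ 1_{t/n})`, `t = lcm(m,n)`. -/
def vvstp {m n : ℕ} (x : Fin m → ℝ) (y : Fin n → ℝ) : ℝ :=
  vecExpand x (Nat.lcm m n / m) ⬝ᵥ
    fun i => vecExpand y (Nat.lcm m n / n) (Fin.cast (dk_dim_eq m n) i)


/-- extend a `Fin m`-indexed vector to `ℕ` by zero -/
def natExt {m : ℕ} (x : Fin m → ℝ) : ℕ → ℝ := fun k => if h : k < m then x ⟨k, h⟩ else 0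

lemma natExt_val {m : ℕ} (x : Fin m → ℝ) (j : Fin m) : natExt x j.val = x j := by
  simp [natExt, j.isLt]

lemma vvstp_eq_sum_range {m n : ℕ} (x : Fin m → ℝ) (y : Fin n → ℝ) :
    vvstp x y = ∑ K ∈ Finset.range (m * (Nat.lcm m n / m)),
      natExt x (K / (Nat.lcm m n / m)) * natExt y (K / (Nat.lcm m n / n)) := by
  rw [vvstp, dotProduct,
    ← Fin.sum_univ_eq_sum_range (fun K => natExt x (K / (Nat.lcm m n / m)) *
      natExt y (K / (Nat.lcm m n / n)))]
  refine Finset.sum_congr rfl fun i _ => ?_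
  show x (Fin.divNat i) * y (Fin.divNat (Fin.cast (dk_dim_eq m n) i)) = _
  rw [← natExt_val x (Fin.divNat i), ← natExt_val y (Fin.divNat (Fin.cast (dk_dim_eq m n) i)),
    Fin.coe_divNat, Fin.coe_divNat, Fin.coe_cast]

lemma sum_range_mul' (f : ℕ → ℝ) (r s : ℕ) :
    ∑ K ∈ Finset.range (r * s), f K
      = ∑ i ∈ Finset.range r, ∑ k ∈ Finset.range s, f (i * s + k) := by
  induction r with
  | zero => simp
  | succ r ih =>
    rw [Finset.sum_range_succ, ← ih, Nat.succ_mul, Finset.range_eq_Ico,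
      ← Finset.sum_Ico_consecutive f (Nat.zero_le (r * s)) (Nat.le_add_right (r * s) s),
      Finset.sum_Ico_eq_sum_range]
    congr 1
    rw [Nat.sub_zero]
    simp
    rw [Finset.sum_Ico_eq_sum_range]; simp

/-- splitting `x ∈ ℝ^m` and `y ∈ ℝ^n` into `r = gcd(m,n)` equal blocks,
the VV-STP is the sum of the VV-STPs of corresponding blocks. -/
theorem stmt2 {m n : ℕ} (x : Fin m → ℝ) (y : Fin n → ℝ) :
    vvstp x y =
      ∑ i : Fin (Nat.gcd m n),
        vvstp
          (fun j : Fin (m / Nat.gcd m n) =>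
            x (Fin.cast (Nat.mul_div_cancel' (Nat.gcd_dvd_left m n)) (finProdFinEquiv (i, j))))
          (fun j : Fin (n / Nat.gcd m n) =>
            y (Fin.cast (Nat.mul_div_cancel' (Nat.gcd_dvd_right m n)) (finProdFinEquiv (i, j)))) := by
  rcases Nat.eq_zero_or_pos m with hm | hm
  · subst hm
    simp [vvstp_eq_sum_range]
  rcases Nat.eq_zero_or_pos n with hn | hn
  · subst hn
    simp [vvstp_eq_sum_range]
  have hr0 : 0 < Nat.gcd m n := Nat.gcd_pos_of_pos_left n hm
  set r := Nat.gcd m n with hrdef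
  set a := m / r with hadef
  set b := n / r with hbdef
  have hma : r * a = m := Nat.mul_div_cancel' (Nat.gcd_dvd_left m n)
  have hnb : r * b = n := Nat.mul_div_cancel' (Nat.gcd_dvd_right m n)
  have ha : 0 < a := Nat.div_pos (Nat.le_of_dvd hm (Nat.gcd_dvd_left m n)) hr0
  have hb : 0 < b := Nat.div_pos (Nat.le_of_dvd hn (Nat.gcd_dvd_right m n)) hr0
  have hcop : Nat.Coprime a b := Nat.coprime_div_gcd_div_gcd hr0
  have hlab : Nat.lcm a b = a * b := hcop.lcm_eq_mul
  have hla : Nat.lcm a b / a = b := by rw [hlab, Nat.mul_div_cancel_left _ ha]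
  have hlb : Nat.lcm a b / b = a := by rw [hlab, Nat.mul_div_cancel _ hb]
  have hlcm : Nat.lcm m n = m * b := by
    have h1 : r * Nat.lcm m n = r * (m * b) := by
      rw [Nat.gcd_mul_lcm, ← hnb]; ring
    exact Nat.eq_of_mul_eq_mul_left hr0 h1
  have hlm : Nat.lcm m n / m = b := by rw [hlcm, Nat.mul_div_cancel_left _ hm]
  have hln : Nat.lcm m n / n = a := by
    have h2 : Nat.lcm m n = n * a := by rw [hlcm, ← hma, ← hnb]; ring
    rw [h2, Nat.mul_div_cancel_left _ hn]
  rw [vvstp_eq_sum_range, hlm, hln]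
  have hmb : m * b = r * (a * b) := by rw [← hma]; ring
  rw [hmb, sum_range_mul', ← Fin.sum_univ_eq_sum_range]
  refine Finset.sum_congr rfl fun i _ => ?_
  rw [vvstp_eq_sum_range, hla, hlb]
  refine Finset.sum_congr rfl fun k hk => ?_
  rw [Finset.mem_range] at hk
  have hkb : k / b < a := (Nat.div_lt_iff_lt_mul hb).mpr hk
  have hka : k / a < b := (Nat.div_lt_iff_lt_mul ha).mpr (by rw [Nat.mul_comm]; exact hk)
  congr 1
  · have h1 : (↑i * (a * b) + k) / b = k / b + a * ↑i := by
      have h2 : ↑i * (a * b) + k = b * (a * ↑i) + k := by ring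
      rw [h2, Nat.mul_add_div hb]; ring
    rw [h1, show (k / b) = ((⟨k / b, hkb⟩ : Fin a) : ℕ) from rfl, natExt_val,
      ← natExt_val x]
    rfl
  · have h1 : (↑i * (a * b) + k) / a = k / a + b * ↑i := by
      have h2 : ↑i * (a * b) + k = a * (b * ↑i) + k := by ring
      rw [h2, Nat.mul_add_div ha]; ring
    rw [h1, show (k / a) = ((⟨k / a, hka⟩ : Fin b) : ℕ) from rfl, natExt_val,
      ← natExt_val y]
    rfl
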